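/- Under hypotheses (H2)–(H3) on the correlation functions, there exist q' ∈ [1,∞) and F' ∈ L^{q'}(ℝ³) ∩ L^∞(ℝ³) such that for all y, z ∈ ℝ³: g₃(0,y,z) = g₂(0,y)g₂(0,z) + (g₂(y,z) − 1)g₂(0,z) + R̃₂(y,z), with |R̃₂(y,z)| ≤ F'(y−z)F'(y). -/

import Mathlib

noncomputable section
open MeasureTheory Metric Real Filter

/-- Three-dimensional Euclidean space. -/
abbrev E3 : Type := EuclideanSpace ℝ (Fin 3)

/-- `F ∈ L^q(ℝ³) ∩ L^∞(ℝ³)`. -/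
def MemLqLinf (q : ℝ) (F : E3 → ℝ) : Prop :=
  MemLp F (ENNReal.ofReal q) volume ∧ MemLp F ⊤ volume

open scoped ENNReal

-- min ≤ geometric mean
lemma min_le_sqrt_mul_sqrt {a b : ℝ} (ha : 0 ≤ a) (hb : 0 ≤ b) :
    min a b ≤ Real.sqrt a * Real.sqrt b := by
  have hm : 0 ≤ min a b := le_min ha hb
  have h : min a b * min a b ≤ a * b :=
    mul_le_mul (min_le_left _ _) (min_le_right _ _) hm ha
  calc min a b = Real.sqrt (min a b * min a b) := (Real.sqrt_mul_self hm).symm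
    _ ≤ Real.sqrt (a * b) := Real.sqrt_le_sqrt h
    _ = Real.sqrt a * Real.sqrt b := Real.sqrt_mul ha b

lemma sqrt_le_one_add (t : ℝ) (ht : 0 ≤ t) : Real.sqrt t ≤ 1 + t := by
  nlinarith [Real.sq_sqrt ht, Real.sqrt_nonneg t, sq_nonneg (Real.sqrt t - 1)]

/-- **(H3′)** Refined decomposition of the three-point correlation function:
under (H2)–(H3), `g₃(0,y,z) = g₂(0,y)g₂(0,z) + (g₂(y,z) − 1)g₂(0,z) + R̃₂(y,z)`
with `|R̃₂(y,z)| ≤ F′(y−z) F′(y)` for some `F′ ∈ L^{q′} ∩ L^∞`. -/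
theorem refined_g3_decomposition
    (g₂ : E3 → E3 → ℝ) (g₃ : E3 → E3 → E3 → ℝ)
    (hg₂meas : Measurable fun p : E3 × E3 => g₂ p.1 p.2)
    (hg₃meas : Measurable fun p : E3 × E3 × E3 => g₃ p.1 p.2.1 p.2.2)
    (hg₂nonneg : ∀ a b, 0 ≤ g₂ a b) (hg₃nonneg : ∀ a b c, 0 ≤ g₃ a b c)
    (hg₂bdd : ∃ C : ℝ, ∀ a b, g₂ a b ≤ C) (hg₃bdd : ∃ C : ℝ, ∀ a b c, g₃ a b c ≤ C)
    (hg₂perm : ∀ a b, g₂ a b = g₂ b a)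
    (hg₃perm₁ : ∀ a b c, g₃ a b c = g₃ b a c)
    (hg₃perm₂ : ∀ a b c, g₃ a b c = g₃ a c b)
    (hg₂trans : ∀ a b t : E3, g₂ (a + t) (b + t) = g₂ a b)
    (hg₃trans : ∀ a b c t : E3, g₃ (a + t) (b + t) (c + t) = g₃ a b c)
    (q : ℝ) (hq : 1 < q) (F : E3 → ℝ) (hF : MemLqLinf q F)
    (hF0 : Tendsto F (cocompact E3) (nhds 0))
    (hH2 : ∀ y : E3, |g₂ 0 y - 1| ≤ F y)
    (hH3 : ∃ R₂ : E3 → E3 → ℝ,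
        (∀ y z : E3, g₃ 0 y z = g₂ 0 y * (g₂ 0 z + R₂ y z)) ∧
        ∀ y z : E3, |R₂ y z| ≤ F (y - z))
    :
    ∃ q' : ℝ, 1 ≤ q' ∧ ∃ F' : E3 → ℝ, MemLqLinf q' F' ∧
      ∃ R' : E3 → E3 → ℝ,
        (∀ y z : E3, g₃ 0 y z = g₂ 0 y * g₂ 0 z + (g₂ y z - 1) * g₂ 0 z + R' y z) ∧
        ∀ y z : E3, |R' y z| ≤ F' (y - z) * F' y := by
  obtain ⟨C₀, hC₀⟩ := hg₂bdd
  obtain ⟨R₂, hR₂eq, hR₂bd⟩ := hH3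
  set B : ℝ := max C₀ 1 with hBdef
  have hB1 : (1:ℝ) ≤ B := le_max_right _ _
  have hB0 : (0:ℝ) < B := lt_of_lt_of_le one_pos hB1
  have hg₂B : ∀ a b, g₂ a b ≤ B := fun a b => (hC₀ a b).trans (le_max_left _ _)
  have hFnn : ∀ x, 0 ≤ F x := fun x => le_trans (abs_nonneg _) (hH2 x)
  -- translation identities
  have h2shift : ∀ y z : E3, g₂ y z = g₂ 0 (z - y) := by
    intro y z
    have := hg₂trans 0 (z - y) y
    simpa using this
  have h2sym : ∀ y z : E3, g₂ y z = g₂ 0 (y - z) := by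
    intro y z
    rw [hg₂perm y z]; exact h2shift z y
  have h2neg : ∀ z : E3, g₂ 0 (-z) = g₂ 0 z := by
    intro z
    have := hg₂trans 0 (-z) z
    simp only [zero_add, neg_add_cancel] at this
    rw [← this, hg₂perm]
  -- second representation of g₃
  have rep2 : ∀ y z : E3, g₃ 0 y z = g₂ y z * (g₂ 0 z + R₂ (y - z) (-z)) := by
    intro y z
    have ht := hg₃trans (-z) 0 (y - z) z
    simp only [neg_add_cancel, zero_add, sub_add_cancel] at ht
    calc g₃ 0 y z = g₃ 0 z y := hg₃perm₂ 0 y z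
      _ = g₃ (-z) 0 (y - z) := by rw [← ht]
      _ = g₃ 0 (-z) (y - z) := hg₃perm₁ _ _ _
      _ = g₃ 0 (y - z) (-z) := hg₃perm₂ _ _ _
      _ = g₂ 0 (y - z) * (g₂ 0 (-z) + R₂ (y - z) (-z)) := hR₂eq _ _
      _ = g₂ y z * (g₂ 0 z + R₂ (y - z) (-z)) := by rw [h2neg, ← h2sym]
  -- the remainder
  set R' : E3 → E3 → ℝ :=
    fun y z => g₃ 0 y z - g₂ 0 y * g₂ 0 z - (g₂ y z - 1) * g₂ 0 z with hR'def
  have habs : ∀ y z : E3, |R' y z| ≤ min (2 * B * F (y - z)) (2 * B * F y) := by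
    intro y z
    have hb2 : ∀ a b, |g₂ a b| ≤ B := fun a b => by
      rw [abs_of_nonneg (hg₂nonneg a b)]; exact hg₂B a b
    have hgyz1 : |g₂ y z - 1| ≤ F (y - z) := by rw [h2sym]; exact hH2 (y - z)
    refine le_min ?_ ?_
    · -- bound by 2B F(y-z)
      have e1 : R' y z = g₂ 0 y * R₂ y z - (g₂ y z - 1) * g₂ 0 z := by
        rw [hR'def]; simp only; rw [hR₂eq y z]; ring
      rw [e1]
      calc |g₂ 0 y * R₂ y z - (g₂ y z - 1) * g₂ 0 z|
          ≤ |g₂ 0 y * R₂ y z| + |(g₂ y z - 1) * g₂ 0 z| := abs_sub _ _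
        _ = |g₂ 0 y| * |R₂ y z| + |g₂ y z - 1| * |g₂ 0 z| := by rw [abs_mul, abs_mul]
        _ ≤ B * F (y - z) + F (y - z) * B :=
            add_le_add (mul_le_mul (hb2 0 y) (hR₂bd y z) (abs_nonneg _) hB0.le)
              (mul_le_mul hgyz1 (hb2 0 z) (abs_nonneg _) (hFnn _))
        _ = 2 * B * F (y - z) := by ring
    · -- bound by 2B F(y)
      have hR₂' : |R₂ (y - z) (-z)| ≤ F y := by
        have := hR₂bd (y - z) (-z)
        simpa using this
      have e2 : R' y z = g₂ y z * R₂ (y - z) (-z) - (g₂ 0 y - 1) * g₂ 0 z := by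
        rw [hR'def]; simp only; rw [rep2 y z]; ring
      rw [e2]
      calc |g₂ y z * R₂ (y - z) (-z) - (g₂ 0 y - 1) * g₂ 0 z|
          ≤ |g₂ y z * R₂ (y - z) (-z)| + |(g₂ 0 y - 1) * g₂ 0 z| := abs_sub _ _
        _ = |g₂ y z| * |R₂ (y - z) (-z)| + |g₂ 0 y - 1| * |g₂ 0 z| := by
            rw [abs_mul, abs_mul]
        _ ≤ B * F y + F y * B :=
            add_le_add (mul_le_mul (hb2 y z) hR₂' (abs_nonneg _) hB0.le)
              (mul_le_mul (hH2 y) (hb2 0 z) (abs_nonneg _) (hFnn _))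
        _ = 2 * B * F y := by ring
  refine ⟨2 * q, by linarith, fun x => Real.sqrt (2 * B * F x), ⟨?_, ?_⟩, R', ?_, ?_⟩
  · -- Memℒp at ofReal (2q)
    have h1 : MemLp (fun x => ‖F x‖ ^ ((2⁻¹ : ℝ≥0∞)).toReal)
        (ENNReal.ofReal q / 2⁻¹) volume := hF.1.norm_rpow_div 2⁻¹
    have h2 := h1.const_mul (Real.sqrt (2 * B))
    have hexp : ENNReal.ofReal q / (2⁻¹ : ℝ≥0∞) = ENNReal.ofReal (2 * q) := by
      rw [div_eq_mul_inv, inv_inv, ENNReal.ofReal_mul (by norm_num : (0:ℝ) ≤ 2)]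
      rw [mul_comm]
      norm_num
    have hfun : (fun x => Real.sqrt (2 * B) * ‖F x‖ ^ ((2⁻¹ : ℝ≥0∞)).toReal)
        = fun x => Real.sqrt (2 * B * F x) := by
      funext x
      rw [Real.sqrt_mul (by linarith : (0:ℝ) ≤ 2 * B) (F x)]
      congr 1
      rw [Real.norm_eq_abs, abs_of_nonneg (hFnn x), Real.sqrt_eq_rpow]
      norm_num
    rw [hexp, hfun] at h2
    exact h2
  · -- Memℒp at ⊤
    have hmeas : AEStronglyMeasurable (fun x => Real.sqrt (2 * B * F x)) volume := by
      exact Real.continuous_sqrt.comp_aestronglyMeasurable (hF.1.1.const_mul (2 * B))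
    have hg : MemLp (fun x => 1 + 2 * B * F x) ⊤ volume :=
      (memLp_top_const (1:ℝ)).add (hF.2.const_mul (2 * B))
    refine hg.of_le hmeas ?_
    filter_upwards with x
    have ht : 0 ≤ 2 * B * F x := mul_nonneg (by linarith) (hFnn x)
    rw [Real.norm_eq_abs, Real.norm_eq_abs, abs_of_nonneg (Real.sqrt_nonneg _),
      abs_of_nonneg (by linarith : (0:ℝ) ≤ 1 + 2 * B * F x)]
    exact sqrt_le_one_add _ ht
  · intro y z; rw [hR'def]; ring
  · intro y z
    calc |R' y z| ≤ min (2 * B * F (y - z)) (2 * B * F y) := habs y z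
      _ ≤ Real.sqrt (2 * B * F (y - z)) * Real.sqrt (2 * B * F y) :=
          min_le_sqrt_mul_sqrt (mul_nonneg (by linarith) (hFnn _))
            (mul_nonneg (by linarith) (hFnn _))
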